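/- Let Ξ : ℝ^m → ℝ^d be Lipschitz with constant L_Ξ and let the NAED classifier be 𝒞(x) = σ(A h_x(T) + b), where h_x solves h' = βΞ(h) + Bx, h(0) = h₀, σ is the softmax function, A ∈ ℝ^{|𝒴|×m}, b ∈ ℝ^{|𝒴|}. Then 𝒞 is Lipschitz from L¹([0,T]; ℝ^n) to ℝ^{|𝒴|}: for x and x̃ = x + η with both ODE solutions existing on [0,T], ‖𝒞(x̃) − 𝒞(x)‖ ≤ L ∫₀^T ‖η(τ)‖ dτ, where L = L_σ ‖A‖ ‖B‖ exp(L_Ξ ‖β‖ T) and L_σ is the Lipschitz constant of softmax. -/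

import Mathlib

open Set NNReal
open scoped BigOperators

/-- The softmax function on `ℝ^k`. -/
noncomputable def softmax {k : ℕ} (x : EuclideanSpace ℝ (Fin k)) : EuclideanSpace ℝ (Fin k) :=
  (WithLp.equiv 2 (Fin k → ℝ)).symm
    (fun i => Real.exp (x i) / ∑ j : Fin k, Real.exp (x j))

/-- Lipschitz stability of the NAED classifier `𝒞(x) = σ(A h_x(T) + b)` from
`L¹([0,T];ℝⁿ)` to `ℝ^{|𝒴|}`: `‖𝒞(x̃) − 𝒞(x)‖ ≤ L_σ ‖A‖ ‖B‖ exp(L_Ξ ‖β‖ T) ∫₀ᵀ ‖η‖`. -/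
theorem naed_classifier_lipschitz
    {m d n k : ℕ}
    (Ξ : EuclideanSpace ℝ (Fin m) → EuclideanSpace ℝ (Fin d))
    (LΞ : ℝ≥0) (hΞ : LipschitzWith LΞ Ξ)
    (β : EuclideanSpace ℝ (Fin d) →L[ℝ] EuclideanSpace ℝ (Fin m))
    (B : EuclideanSpace ℝ (Fin n) →L[ℝ] EuclideanSpace ℝ (Fin m))
    (A : EuclideanSpace ℝ (Fin m) →L[ℝ] EuclideanSpace ℝ (Fin k))
    (b : EuclideanSpace ℝ (Fin k))
    (Lσ : ℝ≥0) (hσ : LipschitzWith Lσ (softmax (k := k)))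
    (T : ℝ) (hT : 0 ≤ T)
    (x x' : ℝ → EuclideanSpace ℝ (Fin n))
    (hx : ContinuousOn x (Icc 0 T)) (hx' : ContinuousOn x' (Icc 0 T))
    (η : ℝ → EuclideanSpace ℝ (Fin n)) (hη : ∀ t, η t = x' t - x t)
    (h h' : ℝ → EuclideanSpace ℝ (Fin m)) (h₀ : EuclideanSpace ℝ (Fin m))
    (hinit : h 0 = h₀) (hinit' : h' 0 = h₀)
    (hode : ∀ t ∈ Icc 0 T, HasDerivAt h (β (Ξ (h t)) + B (x t)) t)
    (hode' : ∀ t ∈ Icc 0 T, HasDerivAt h' (β (Ξ (h' t)) + B (x' t)) t) :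
    ‖softmax (A (h' T) + b) - softmax (A (h T) + b)‖ ≤
      (Lσ : ℝ) * ‖A‖ * ‖B‖ * Real.exp ((LΞ : ℝ) * ‖β‖ * T) * ∫ τ in (0:ℝ)..T, ‖η τ‖ := by
  -- Notation
  set I : ℝ := ∫ τ in (0:ℝ)..T, ‖η τ‖ with hIdef
  set K : ℝ := ‖β‖ * (LΞ : ℝ) with hKdef
  have hK0 : 0 ≤ K := mul_nonneg (norm_nonneg _) LΞ.coe_nonneg
  have hηfun : η = fun t => x' t - x t := funext hη
  have hηcont : ContinuousOn η (Icc 0 T) := by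
    rw [hηfun]; exact hx'.sub hx
  have hBηcont : ContinuousOn (fun τ => B (η τ)) (Icc 0 T) :=
    B.continuous.comp_continuousOn hηcont
  have hI0 : 0 ≤ I := by
    apply intervalIntegral.integral_nonneg hT
    intro t _; exact norm_nonneg _
  set C : ℝ := ‖B‖ * I with hCdef
  have hC0 : 0 ≤ C := mul_nonneg (norm_nonneg _) hI0
  have huIcc : uIcc (0:ℝ) T = Icc 0 T := uIcc_of_le hT
  have hBηint : IntervalIntegrable (fun τ => B (η τ)) MeasureTheory.volume 0 T := by
    apply ContinuousOn.intervalIntegrable; rwa [huIcc]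
  set G : ℝ → EuclideanSpace ℝ (Fin m) := fun t => ∫ τ in (0:ℝ)..t, B (η τ) with hGdef
  set g : ℝ → EuclideanSpace ℝ (Fin m) := fun t => h' t - h t with hgdef
  set w : ℝ → EuclideanSpace ℝ (Fin m) := fun t => g t - G t with hwdef
  -- continuity
  have hhc : ContinuousOn h (Icc 0 T) := fun t ht => (hode t ht).continuousAt.continuousWithinAt
  have hhc' : ContinuousOn h' (Icc 0 T) := fun t ht => (hode' t ht).continuousAt.continuousWithinAt
  have hGcont : ContinuousOn G (Icc 0 T) := by
    have := intervalIntegral.continuousOn_primitive_interval'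
      (f := fun τ => B (η τ)) (μ := MeasureTheory.volume) (b₁ := (0:ℝ)) (b₂ := T)
      hBηint (by rw [huIcc]; exact left_mem_Icc.2 hT)
    rwa [huIcc] at this
  have hwcont : ContinuousOn w (Icc 0 T) := (hhc'.sub hhc).sub hGcont
  -- bound on ‖G t‖
  have hGbound : ∀ t ∈ Icc 0 T, ‖G t‖ ≤ C := by
    intro t ht
    have h1 : ‖G t‖ ≤ ∫ τ in (0:ℝ)..t, ‖B (η τ)‖ :=
      intervalIntegral.norm_integral_le_integral_norm ht.1
    have hsub : Icc (0:ℝ) t ⊆ Icc 0 T := Icc_subset_Icc le_rfl ht.2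
    have hnint : IntervalIntegrable (fun τ => ‖B (η τ)‖) MeasureTheory.volume 0 T := by
      apply ContinuousOn.intervalIntegrable; rw [huIcc]; exact hBηcont.norm
    have hnint2 : IntervalIntegrable (fun τ => ‖B‖ * ‖η τ‖) MeasureTheory.volume 0 T := by
      apply ContinuousOn.intervalIntegrable; rw [huIcc]
      exact continuousOn_const.mul hηcont.norm
    have h2 : (∫ τ in (0:ℝ)..t, ‖B (η τ)‖) ≤ ∫ τ in (0:ℝ)..t, ‖B‖ * ‖η τ‖ := by
      apply intervalIntegral.integral_mono_on ht.1
        (hnint.mono_set (by rw [huIcc, uIcc_of_le ht.1]; exact hsub))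
        (hnint2.mono_set (by rw [huIcc, uIcc_of_le ht.1]; exact hsub))
      intro τ _; exact B.le_opNorm _
    have h3 : (∫ τ in (0:ℝ)..t, ‖B‖ * ‖η τ‖) ≤ ∫ τ in (0:ℝ)..T, ‖B‖ * ‖η τ‖ := by
      apply intervalIntegral.integral_mono_interval le_rfl ht.1 ht.2
      · filter_upwards with τ using mul_nonneg (norm_nonneg _) (norm_nonneg _)
      · exact hnint2
    have h4 : (∫ τ in (0:ℝ)..T, ‖B‖ * ‖η τ‖) = C := by
      rw [hCdef, hIdef, ← intervalIntegral.integral_const_mul]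
    linarith
  -- derivative of w on [0, T)
  have hw' : ∀ t ∈ Ico 0 T, HasDerivWithinAt w (β (Ξ (h' t)) - β (Ξ (h t))) (Ici t) t := by
    intro t ht
    have htm : t ∈ Icc 0 T := ⟨ht.1, le_of_lt ht.2⟩
    have hmem : Icc (0:ℝ) T ∈ nhdsWithin t (Ici t) := by
      apply mem_nhdsWithin.2 ⟨Iio T, isOpen_Iio, ht.2, ?_⟩
      rintro z ⟨hz1, hz2⟩
      exact ⟨le_trans ht.1 hz2, le_of_lt hz1⟩
    have hmem2 : Icc (0:ℝ) T ∈ nhdsWithin t (Ioi t) :=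
      nhdsWithin_mono t Ioi_subset_Ici_self hmem
    have hint_t : IntervalIntegrable (fun τ => B (η τ)) MeasureTheory.volume 0 t := by
      apply ContinuousOn.intervalIntegrable
      refine hBηcont.mono ?_
      rw [uIcc_of_le ht.1]; exact Icc_subset_Icc le_rfl htm.2
    have hmeas : StronglyMeasurableAtFilter (fun τ => B (η τ)) (nhdsWithin t (Ioi t))
        MeasureTheory.volume :=
      ⟨Icc 0 T, hmem2, (hBηcont.aestronglyMeasurable measurableSet_Icc)⟩
    have hcw : ContinuousWithinAt (fun τ => B (η τ)) (Ioi t) t :=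
      ((hBηcont t htm).mono_of_mem_nhdsWithin hmem2)
    have hG' : HasDerivWithinAt G (B (η t)) (Ici t) t :=
      intervalIntegral.integral_hasDerivWithinAt_right hint_t hmeas hcw
    have hg' : HasDerivWithinAt g ((β (Ξ (h' t)) + B (x' t)) - (β (Ξ (h t)) + B (x t)))
        (Ici t) t :=
      (((hode' t htm).sub (hode t htm)).hasDerivWithinAt)
    have := hg'.sub hG'
    have e : β (Ξ (h' t)) - β (Ξ (h t)) =
        β (Ξ (h' t)) + B (x' t) - (β (Ξ (h t)) + B (x t)) - B (η t) := by
      rw [hη, map_sub]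
      abel
    rw [e]; exact this
  -- Grönwall bound on w
  have hbound : ∀ t ∈ Ico 0 T, ‖β (Ξ (h' t)) - β (Ξ (h t))‖ ≤ K * ‖w t‖ + K * C := by
    intro t ht
    have htm : t ∈ Icc 0 T := ⟨ht.1, le_of_lt ht.2⟩
    have h1 : ‖β (Ξ (h' t)) - β (Ξ (h t))‖ ≤ ‖β‖ * ‖Ξ (h' t) - Ξ (h t)‖ := by
      rw [← map_sub]; exact β.le_opNorm _
    have h2 : ‖Ξ (h' t) - Ξ (h t)‖ ≤ (LΞ : ℝ) * ‖h' t - h t‖ := by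
      have := hΞ.dist_le_mul (h' t) (h t)
      rwa [dist_eq_norm, dist_eq_norm] at this
    have h3 : ‖g t‖ ≤ ‖w t‖ + ‖G t‖ := by
      have : g t = w t + G t := by simp [hwdef]
      rw [this]; exact norm_add_le _ _
    have h4 : ‖G t‖ ≤ C := hGbound t htm
    have h5 : ‖β (Ξ (h' t)) - β (Ξ (h t))‖ ≤ K * ‖g t‖ := by
      calc ‖β (Ξ (h' t)) - β (Ξ (h t))‖ ≤ ‖β‖ * ((LΞ:ℝ) * ‖h' t - h t‖) :=
            h1.trans (mul_le_mul_of_nonneg_left h2 (norm_nonneg _))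
        _ = K * ‖g t‖ := by rw [hKdef]; ring_nf; rfl
    have := mul_le_mul_of_nonneg_left (h3.trans (by linarith) : ‖g t‖ ≤ ‖w t‖ + C) hK0
    nlinarith [norm_nonneg (w t)]
  have hw0 : ‖w 0‖ ≤ 0 := by
    simp [hwdef, hgdef, hGdef, hinit, hinit']
  have hgron := norm_le_gronwallBound_of_norm_deriv_right_le hwcont hw' hw0 hbound T
    (right_mem_Icc.2 hT)
  have hgb : gronwallBound 0 K (K * C) (T - 0) ≤ C * (Real.exp (K * T) - 1) := by
    rw [sub_zero, gronwallBound]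
    by_cases hK : K = 0
    · simp [hK]
    · rw [if_neg hK]
      have : K * C / K = C := by field_simp
      rw [this]; simp
  have hwT : ‖w T‖ ≤ C * (Real.exp (K * T) - 1) := hgron.trans hgb
  have hgT : ‖g T‖ ≤ C * Real.exp (K * T) := by
    have h3 : ‖g T‖ ≤ ‖w T‖ + ‖G T‖ := by
      have : g T = w T + G T := by simp [hwdef]
      rw [this]; exact norm_add_le _ _
    have h4 : ‖G T‖ ≤ C := hGbound T (right_mem_Icc.2 hT)
    nlinarith
  -- final assembly
  have hlip : ‖softmax (A (h' T) + b) - softmax (A (h T) + b)‖ ≤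
      (Lσ : ℝ) * ‖A (h' T) + b - (A (h T) + b)‖ := by
    have := hσ.dist_le_mul (A (h' T) + b) (A (h T) + b)
    rwa [dist_eq_norm, dist_eq_norm] at this
  have heq : A (h' T) + b - (A (h T) + b) = A (g T) := by
    rw [hgdef, map_sub]; abel
  have hA : ‖A (g T)‖ ≤ ‖A‖ * ‖g T‖ := A.le_opNorm _
  have hexp : Real.exp (K * T) = Real.exp ((LΞ : ℝ) * ‖β‖ * T) := by
    rw [hKdef]; ring_nf
  calc ‖softmax (A (h' T) + b) - softmax (A (h T) + b)‖
      ≤ (Lσ : ℝ) * ‖A (g T)‖ := by rw [← heq]; exact hlip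
    _ ≤ (Lσ : ℝ) * (‖A‖ * ‖g T‖) :=
        mul_le_mul_of_nonneg_left hA Lσ.coe_nonneg
    _ ≤ (Lσ : ℝ) * (‖A‖ * (C * Real.exp (K * T))) := by
        apply mul_le_mul_of_nonneg_left _ Lσ.coe_nonneg
        exact mul_le_mul_of_nonneg_left hgT (norm_nonneg _)
    _ = (Lσ : ℝ) * ‖A‖ * ‖B‖ * Real.exp ((LΞ : ℝ) * ‖β‖ * T) * I := by
        rw [hCdef, ← hexp]; ring
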